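/- Let d ≥ 1, M ≥ 2, let p, p_1, …, p_M ∈ ℝ^d with p ≠ p_m for all m, and let c > 0. Define τ_m = ‖p − p_m‖₂/c, the delay-gradient vectors g_i ∈ ℝ^M by [g_i]_m = (p_i − [p_m]_i)/(c‖p − p_m‖₂), the centering projection P = I_M − (1/M)𝟙𝟙ᵀ, the geometry matrix G ∈ ℝ^{d×d} by G_{ij} = (P g_i)ᵀ(P g_j), and for f ∈ ℝ the steering vector v(f) ∈ ℂ^M with [v(f)]_m = exp(−2πℹ f τ_m). Fix 0 < f_L < f_H, S_H > 0, N₀ > 0, and a rate R > 0. Set the band-selective water level λ_sel = (S_H + N₀)·2^{−R/(f_H − f_L)}, gain B_H = 1 − λ_sel/(S_H + N₀), effective noise S_{w,H} = B_H² N₀ + λ_sel B_H, γ_H = S_H B_H²/S_{w,H}, and w_H = 2Mγ_H²/(1 + Mγ_H). For f with f_L < |f| ≤ f_H let S(f) = S_H B_H² v(f)v(f)* + S_{w,H} I_M and S'_i(f) = 2πℹ f S_H B_H² (v(f)v(f)* D_i − D_i v(f)v(f)*), where D_i = diag(g_i). Then 0 < λ_sel < S_H + N₀, the rate constraint (f_H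 − f_L)·log₂((S_H + N₀)/λ_sel) = R holds, and for all 1 ≤ i, j ≤ d: (1/2)∫_{{f : f_L < |f| ≤ f_H}} tr(S(f)^{-1} S'_i(f) S(f)^{-1} S'_j(f)) df = (4π²/3)·(f_H³ − f_L³)·w_H·G_{ij}. -/

import Mathlib

open Matrix Real MeasureTheory

namespace BandSelAux

variable {M : ℕ}

lemma trQA (u w : Fin M → ℂ) (A : Matrix (Fin M) (Fin M) ℂ) :
    Matrix.trace (Matrix.vecMulVec u w * A) = w ⬝ᵥ A.mulVec u := by
  simp only [Matrix.trace, Matrix.diag, Matrix.mul_apply, Matrix.vecMulVec_apply,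
    dotProduct, Matrix.mulVec, Finset.mul_sum]
  rw [Finset.sum_comm]
  exact Finset.sum_congr rfl fun k _ => Finset.sum_congr rfl fun i _ => by ring

lemma QAQ (u w u' w' : Fin M → ℂ) (A : Matrix (Fin M) (Fin M) ℂ) :
    Matrix.vecMulVec u w * A * Matrix.vecMulVec u' w'
      = (w ⬝ᵥ A.mulVec u') • Matrix.vecMulVec u w' := by
  ext i j
  simp only [Matrix.mul_apply, Matrix.vecMulVec_apply, Matrix.smul_apply, smul_eq_mul,
    dotProduct, Matrix.mulVec, Finset.sum_mul, Finset.mul_sum]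
  rw [Finset.sum_comm]
  exact Finset.sum_congr rfl fun k _ => Finset.sum_congr rfl fun l _ => by ring

lemma QQ (u w : Fin M → ℂ) :
    Matrix.vecMulVec u w * Matrix.vecMulVec u w = (w ⬝ᵥ u) • Matrix.vecMulVec u w := by
  have h := QAQ u w u w 1
  simpa using h

lemma trQ (u w : Fin M → ℂ) : Matrix.trace (Matrix.vecMulVec u w) = w ⬝ᵥ u := by
  simp [Matrix.trace, Matrix.diag, Matrix.vecMulVec_apply, dotProduct, mul_comm]

lemma A1 (u w : Fin M → ℂ) (A B : Matrix (Fin M) (Fin M) ℂ) :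
    Matrix.trace (Matrix.vecMulVec u w * A * (Matrix.vecMulVec u w * B))
      = (w ⬝ᵥ A.mulVec u) * (w ⬝ᵥ B.mulVec u) := by
  rw [← mul_assoc, QAQ, smul_mul_assoc, Matrix.trace_smul, trQA, smul_eq_mul]

lemma A2 (u w : Fin M → ℂ) (A B : Matrix (Fin M) (Fin M) ℂ) :
    Matrix.trace (Matrix.vecMulVec u w * A * (B * Matrix.vecMulVec u w))
      = (w ⬝ᵥ (A * B).mulVec u) * (w ⬝ᵥ u) := by
  rw [← mul_assoc, mul_assoc (Matrix.vecMulVec u w) A B, QAQ, Matrix.trace_smul, trQ,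
    smul_eq_mul]

lemma A3 (u w : Fin M → ℂ) (A : Matrix (Fin M) (Fin M) ℂ) :
    Matrix.trace (Matrix.vecMulVec u w * A * Matrix.vecMulVec u w)
      = (w ⬝ᵥ A.mulVec u) * (w ⬝ᵥ u) := by
  rw [QAQ, Matrix.trace_smul, trQ, smul_eq_mul]

lemma A4 (u w : Fin M → ℂ) (A B : Matrix (Fin M) (Fin M) ℂ) :
    Matrix.trace (A * Matrix.vecMulVec u w * (Matrix.vecMulVec u w * B))
      = (w ⬝ᵥ (B * A).mulVec u) * (w ⬝ᵥ u) := by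
  rw [Matrix.trace_mul_comm, A2]

lemma A5 (u w : Fin M → ℂ) (A B : Matrix (Fin M) (Fin M) ℂ) :
    Matrix.trace (A * Matrix.vecMulVec u w * (B * Matrix.vecMulVec u w))
      = (w ⬝ᵥ A.mulVec u) * (w ⬝ᵥ B.mulVec u) := by
  rw [← mul_assoc, mul_assoc A, mul_assoc A, QAQ, mul_smul_comm, Matrix.trace_smul,
    Matrix.trace_mul_comm, trQA, smul_eq_mul, mul_comm]

lemma A6 (u w : Fin M → ℂ) (A : Matrix (Fin M) (Fin M) ℂ) :
    Matrix.trace (A * Matrix.vecMulVec u w * Matrix.vecMulVec u w)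
      = (w ⬝ᵥ u) * (w ⬝ᵥ A.mulVec u) := by
  rw [mul_assoc, QQ, mul_smul_comm, Matrix.trace_smul, Matrix.trace_mul_comm, trQA,
    smul_eq_mul]

lemma A7 (u w : Fin M → ℂ) (B : Matrix (Fin M) (Fin M) ℂ) :
    Matrix.trace (Matrix.vecMulVec u w * (Matrix.vecMulVec u w * B))
      = (w ⬝ᵥ u) * (w ⬝ᵥ B.mulVec u) := by
  rw [← mul_assoc, QQ, smul_mul_assoc, Matrix.trace_smul, trQA, smul_eq_mul]

lemma A8 (u w : Fin M → ℂ) (B : Matrix (Fin M) (Fin M) ℂ) :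
    Matrix.trace (Matrix.vecMulVec u w * (B * Matrix.vecMulVec u w))
      = (w ⬝ᵥ u) * (w ⬝ᵥ B.mulVec u) := by
  rw [Matrix.trace_mul_comm, A6]

lemma A9 (u w : Fin M → ℂ) :
    Matrix.trace (Matrix.vecMulVec u w * Matrix.vecMulVec u w)
      = (w ⬝ᵥ u) * (w ⬝ᵥ u) := by
  rw [QQ, Matrix.trace_smul, trQ, smul_eq_mul]

end BandSelAux

set_option maxHeartbeats 2000000 in
theorem band_selective_FI_rate
    (d M : ℕ) (hd : 1 ≤ d) (hM : 2 ≤ M)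
    (p : EuclideanSpace ℝ (Fin d)) (ps : Fin M → EuclideanSpace ℝ (Fin d))
    (hps : ∀ m, p ≠ ps m) (c : ℝ) (hc : 0 < c)
    (τ : Fin M → ℝ) (hτ : ∀ m, τ m = ‖p - ps m‖ / c)
    (g : Fin d → Fin M → ℝ)
    (hg : ∀ i m, g i m = (p i - ps m i) / (c * ‖p - ps m‖))
    (P : Matrix (Fin M) (Fin M) ℝ)
    (hP : P = (1 : Matrix (Fin M) (Fin M) ℝ) - ((M : ℝ))⁻¹ • vecMulVec 1 1)
    (G : Fin d → Fin d → ℝ)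
    (hG : ∀ i j, G i j = P.mulVec (g i) ⬝ᵥ P.mulVec (g j))
    (v : ℝ → Fin M → ℂ)
    (hv : ∀ f m, v f m = Complex.exp (-(2 * π * Complex.I * f * τ m)))
    (fL fH SH N0 R : ℝ)
    (hfL : 0 < fL) (hfLH : fL < fH) (hSH : 0 < SH) (hN0 : 0 < N0) (hR : 0 < R)
    (lamSel : ℝ) (hlamSel : lamSel = (SH + N0) * (2 : ℝ) ^ (-(R / (fH - fL))))
    (BH : ℝ) (hBH : BH = 1 - lamSel / (SH + N0))
    (SwH : ℝ) (hSwH : SwH = BH ^ 2 * N0 + lamSel * BH)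
    (γH : ℝ) (hγH : γH = SH * BH ^ 2 / SwH)
    (wH : ℝ) (hwH : wH = 2 * M * γH ^ 2 / (1 + M * γH))
    (D : Fin d → Matrix (Fin M) (Fin M) ℂ)
    (hD : ∀ i, D i = Matrix.diagonal fun m => (g i m : ℂ))
    (S : ℝ → Matrix (Fin M) (Fin M) ℂ)
    (S' : Fin d → ℝ → Matrix (Fin M) (Fin M) ℂ)
    (hShigh : ∀ f : ℝ, fL < |f| → |f| ≤ fH →
      S f = ((SH * BH ^ 2 : ℝ) : ℂ) • vecMulVec (v f) (star (v f))
        + ((SwH : ℝ) : ℂ) • (1 : Matrix (Fin M) (Fin M) ℂ))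
    (hS'high : ∀ (i : Fin d) (f : ℝ), fL < |f| → |f| ≤ fH →
      S' i f = (2 * π * Complex.I * f * (SH * BH ^ 2)) •
        (vecMulVec (v f) (star (v f)) * D i - D i * vecMulVec (v f) (star (v f)))) :
    0 < lamSel ∧ lamSel < SH + N0 ∧
    (fH - fL) * Real.logb 2 ((SH + N0) / lamSel) = R ∧
    ∀ i j : Fin d,
      (1 / 2 : ℂ) * ∫ f in {f : ℝ | fL < |f| ∧ |f| ≤ fH},
          Matrix.trace ((S f)⁻¹ * S' i f * (S f)⁻¹ * S' j f)
        = (((4 * π ^ 2 / 3) * (fH ^ 3 - fL ^ 3) * wH * G i j : ℝ) : ℂ) := by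
  have hSN : 0 < SH + N0 := by linarith
  have hfHL : 0 < fH - fL := by linarith
  have hpow0 : (0:ℝ) < (2:ℝ) ^ (-(R / (fH - fL))) := Real.rpow_pos_of_pos two_pos _
  have hpow1 : (2:ℝ) ^ (-(R / (fH - fL))) < 1 := by
    apply Real.rpow_lt_one_of_one_lt_of_neg one_lt_two
    have : 0 < R / (fH - fL) := div_pos hR hfHL
    linarith
  have hlam0 : 0 < lamSel := by rw [hlamSel]; exact mul_pos hSN hpow0
  have hlamlt : lamSel < SH + N0 := by
    rw [hlamSel]; nlinarith
  have hBH0 : 0 < BH := by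
    rw [hBH]
    have := (div_lt_one hSN).mpr hlamlt
    linarith
  have hSwH0 : 0 < SwH := by
    have h1 : 0 < BH ^ 2 * N0 := by positivity
    have h2 : 0 < lamSel * BH := mul_pos hlam0 hBH0
    rw [hSwH]; linarith
  have ha0 : 0 < SH * BH ^ 2 := by positivity
  have hM0 : (0:ℝ) < (M:ℝ) := by
    have : 0 < M := by omega
    exact_mod_cast this
  have hbMa : 0 < SwH + (M:ℝ) * (SH * BH ^ 2) := by nlinarith
  refine ⟨hlam0, hlamlt, ?_, ?_⟩
  · rw [hlamSel]
    have h2 : (SH + N0) / ((SH + N0) * (2:ℝ) ^ (-(R / (fH - fL)))) = (2:ℝ) ^ (R / (fH - fL)) := by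
      rw [Real.rpow_neg two_pos.le]
      field_simp
    rw [h2, Real.logb_rpow two_pos (by norm_num)]
    field_simp
  · intro i j
    -- the geometry identity
    have hGM : G i j = ((M:ℝ) * (∑ m, g i m * g j m)
        - (∑ m, g i m) * (∑ m, g j m)) / M := by
      have hPx : ∀ x : Fin M → ℝ, P.mulVec x = fun k => x k - (M:ℝ)⁻¹ * ∑ l, x l := by
        intro x; funext k
        rw [hP, Matrix.sub_mulVec, Matrix.smul_mulVec]
        simp [Matrix.one_mulVec, Matrix.mulVec, dotProduct, Matrix.vecMulVec_apply]
      rw [hG, hPx, hPx]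
      simp only [dotProduct]
      have expand : ∀ k : Fin M,
          (g i k - (M:ℝ)⁻¹ * ∑ l, g i l) * (g j k - (M:ℝ)⁻¹ * ∑ l, g j l)
          = g i k * g j k - ((M:ℝ)⁻¹ * ∑ l, g i l) * g j k
            - ((M:ℝ)⁻¹ * ∑ l, g j l) * g i k
            + ((M:ℝ)⁻¹ * ∑ l, g i l) * ((M:ℝ)⁻¹ * ∑ l, g j l) := fun k => by ring
      rw [Finset.sum_congr rfl fun k _ => expand k]
      rw [Finset.sum_add_distrib, Finset.sum_sub_distrib, Finset.sum_sub_distrib,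
        ← Finset.mul_sum, ← Finset.mul_sum, Finset.sum_const, Finset.card_univ,
        Fintype.card_fin, nsmul_eq_mul]
      field_simp
      ring
    -- pointwise value of the integrand on the band
    have key : ∀ f₀ ∈ {f : ℝ | fL < |f| ∧ |f| ≤ fH},
        Matrix.trace ((S f₀)⁻¹ * S' i f₀ * (S f₀)⁻¹ * S' j f₀)
          = ((4 * π ^ 2 * wH * G i j * f₀ ^ 2 : ℝ) : ℂ) := by
      rintro f ⟨hf1, hf2⟩
      have humod : ∀ m, (starRingEnd ℂ) (v f m) * v f m = 1 := by
        intro m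
        rw [hv f m, ← Complex.exp_conj, ← Complex.exp_add]
        rw [show (starRingEnd ℂ) (-(2 * ↑π * Complex.I * ↑f * ↑(τ m)))
              + (-(2 * ↑π * Complex.I * ↑f * ↑(τ m))) = 0 from by
          simp [Complex.conj_I, Complex.conj_ofReal, map_ofNat]]
        exact Complex.exp_zero
      have hsu : star (v f) ⬝ᵥ v f = (M:ℂ) := by
        simp only [dotProduct, Pi.star_apply, RCLike.star_def, humod]
        simp
      have hsD : ∀ k, star (v f) ⬝ᵥ (D k).mulVec (v f) = ((∑ m, g k m : ℝ) : ℂ) := by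
        intro k
        rw [hD k]
        simp only [dotProduct, Matrix.mulVec_diagonal, Pi.star_apply, RCLike.star_def]
        push_cast
        refine Finset.sum_congr rfl fun m _ => ?_
        calc (starRingEnd ℂ) (v f m) * ((g k m : ℂ) * v f m)
            = (g k m : ℂ) * ((starRingEnd ℂ) (v f m) * v f m) := by ring
          _ = (g k m : ℂ) := by rw [humod m, mul_one]
      have htD : ∀ k l, star (v f) ⬝ᵥ (D k * D l).mulVec (v f)
          = ((∑ m, g k m * g l m : ℝ) : ℂ) := by
        intro k l
        rw [hD k, hD l, Matrix.diagonal_mul_diagonal]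
        simp only [dotProduct, Matrix.mulVec_diagonal, Pi.star_apply, RCLike.star_def]
        push_cast
        refine Finset.sum_congr rfl fun m _ => ?_
        calc (starRingEnd ℂ) (v f m) * ((g k m : ℂ) * (g l m : ℂ) * v f m)
            = (g k m : ℂ) * (g l m : ℂ) * ((starRingEnd ℂ) (v f m) * v f m) := by ring
          _ = (g k m : ℂ) * (g l m : ℂ) := by rw [humod m, mul_one]
      have hQQM : vecMulVec (v f) (star (v f)) * vecMulVec (v f) (star (v f))
          = (M:ℂ) • vecMulVec (v f) (star (v f)) := by
        rw [BandSelAux.QQ, hsu]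
      have hSwHne : ((SwH:ℝ):ℂ) ≠ 0 := Complex.ofReal_ne_zero.mpr hSwH0.ne'
      have hd2 : (SwH:ℂ) + (M:ℂ) * ((SH:ℂ) * (BH:ℂ)^2) ≠ 0 := by
        have h := Complex.ofReal_ne_zero.mpr hbMa.ne'
        push_cast at h
        convert h using 2
      have hd3 : (SH:ℂ) * (BH:ℂ)^2 * (M:ℂ) * (SwH:ℂ) + (SwH:ℂ)^2 ≠ 0 := by
        intro h
        exact mul_ne_zero hSwHne hd2 (by linear_combination h)
      have hinv : (S f)⁻¹ = ((SwH⁻¹ : ℝ):ℂ) • 1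
          + ((-(SH * BH ^ 2 / (SwH * (SwH + M * (SH * BH ^ 2)))) : ℝ):ℂ) •
            vecMulVec (v f) (star (v f)) := by
        apply Matrix.inv_eq_right_inv
        rw [hShigh f hf1 hf2]
        simp only [add_mul, mul_add, smul_mul_assoc, mul_smul_comm, smul_smul,
          Matrix.one_mul, Matrix.mul_one]
        rw [hQQM, smul_smul]
        rw [← one_smul ℂ (1 : Matrix (Fin M) (Fin M) ℂ)]
        match_scalars
        · push_cast
          have hinvd : ((SH:ℂ) * (BH:ℂ) ^ 2 * (M:ℂ) * (SwH:ℂ) + (SwH:ℂ) ^ 2)⁻¹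
              * ((SH:ℂ) * (BH:ℂ) ^ 2 * (M:ℂ) * (SwH:ℂ) + (SwH:ℂ) ^ 2) = 1 :=
            inv_mul_cancel₀ hd3
          rw [show (SwH:ℂ) * (SwH:ℂ) + (SwH:ℂ) * ((M:ℂ) * ((SH:ℂ) * (BH:ℂ) ^ 2))
              = (SwH:ℂ) * ((SwH:ℂ) + (M:ℂ) * ((SH:ℂ) * (BH:ℂ) ^ 2)) by ring, div_eq_mul_inv, mul_inv]
          have hy : ((SwH:ℂ) + (M:ℂ) * ((SH:ℂ) * (BH:ℂ) ^ 2))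
              * ((SwH:ℂ) + (M:ℂ) * ((SH:ℂ) * (BH:ℂ) ^ 2))⁻¹ = 1 := mul_inv_cancel₀ hd2
          linear_combination (-((SH:ℂ) * (BH:ℂ) ^ 2 * (SwH:ℂ)⁻¹)) * hy
        · push_cast
          field_simp [hSwHne, hd2]
      have hSA : ∀ k : Fin d, (S f)⁻¹ * S' k f
          = (2 * ↑π * Complex.I * ↑f * (↑SH * ↑BH ^ 2)) •
            ((((SwH⁻¹ : ℝ):ℂ) + ((-(SH * BH ^ 2 / (SwH * (SwH + M * (SH * BH ^ 2)))) : ℝ):ℂ) * (M:ℂ)) •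
                (vecMulVec (v f) (star (v f)) * D k)
              - ((SwH⁻¹ : ℝ):ℂ) • (D k * vecMulVec (v f) (star (v f)))
              - (((-(SH * BH ^ 2 / (SwH * (SwH + M * (SH * BH ^ 2)))) : ℝ):ℂ) * ((∑ m, g k m : ℝ) : ℂ)) •
                vecMulVec (v f) (star (v f))) := by
        intro k
        rw [hinv, hS'high k f hf1 hf2, mul_smul_comm]
        congr 1
        have e1 : vecMulVec (v f) (star (v f)) * (vecMulVec (v f) (star (v f)) * D k)
            = (M:ℂ) • (vecMulVec (v f) (star (v f)) * D k) := by
          rw [← mul_assoc, hQQM, smul_mul_assoc]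
        have e2 : vecMulVec (v f) (star (v f)) * (D k * vecMulVec (v f) (star (v f)))
            = ((∑ m, g k m : ℝ) : ℂ) • vecMulVec (v f) (star (v f)) := by
          rw [← mul_assoc, BandSelAux.QAQ, hsD k]
        simp only [add_mul, mul_sub, smul_mul_assoc, Matrix.one_mul]
        rw [e1, e2]
        module
      rw [mul_assoc, hSA i, hSA j, smul_mul_assoc, mul_smul_comm, smul_smul,
        Matrix.trace_smul]
      simp only [Matrix.sub_mul, Matrix.mul_sub, smul_mul_assoc, mul_smul_comm, smul_smul,
        Matrix.trace_sub, Matrix.trace_smul]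
      rw [BandSelAux.A1, BandSelAux.A2, BandSelAux.A3, BandSelAux.A4, BandSelAux.A5,
        BandSelAux.A6, BandSelAux.A7, BandSelAux.A8, BandSelAux.A9]
      rw [hsu, hsD i, hsD j, htD i j, htD j i]
      simp only [smul_eq_mul]
      rw [show (2 * ↑π * Complex.I * ↑f * (↑SH * ↑BH ^ 2))
            * (2 * ↑π * Complex.I * ↑f * (↑SH * ↑BH ^ 2))
          = ((-(2 * π * f * (SH * BH ^ 2)) ^ 2 : ℝ) : ℂ) from by
        rw [show (2 * ↑π * Complex.I * ↑f * (↑SH * ↑BH ^ 2))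
              * (2 * ↑π * Complex.I * ↑f * (↑SH * ↑BH ^ 2))
            = (Complex.I * Complex.I)
              * ((2 * ↑π * ↑f * (↑SH * ↑BH ^ 2)) * (2 * ↑π * ↑f * (↑SH * ↑BH ^ 2))) from by ring]
        rw [Complex.I_mul_I]
        push_cast
        ring]
      rw [show (∑ m, g j m * g i m) = ∑ m, g i m * g j m from
        Finset.sum_congr rfl fun m _ => mul_comm _ _]
      rw [hGM, hwH, hγH]
      rw [show ((M:ℕ):ℂ) = (((M:ℕ):ℝ):ℂ) from by norm_cast]
      have h1Mγ : (0:ℝ) < 1 + (M:ℝ) * γH := by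
        have : 0 < γH := by rw [hγH]; positivity
        nlinarith
      norm_cast
      field_simp [hSwH0.ne', hbMa.ne', hM0.ne', h1Mγ.ne']
      push_cast
      ring
    have hEeq : {f : ℝ | fL < |f| ∧ |f| ≤ fH} = Set.Ico (-fH) (-fL) ∪ Set.Ioc fL fH := by
      ext x
      simp only [Set.mem_setOf_eq, Set.mem_union, Set.mem_Ico, Set.mem_Ioc]
      rcases le_or_gt x 0 with hx | hx
      · rw [abs_of_nonpos hx]
        constructor
        · rintro ⟨h1, h2⟩; exact Or.inl ⟨by linarith, by linarith⟩
        · rintro (⟨h1, h2⟩ | ⟨h1, h2⟩) <;> constructor <;> linarith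
      · rw [abs_of_pos hx]
        constructor
        · rintro ⟨h1, h2⟩; exact Or.inr ⟨h1, h2⟩
        · rintro (⟨h1, h2⟩ | ⟨h1, h2⟩) <;> constructor <;> linarith
    have hmeas : MeasurableSet {f : ℝ | fL < |f| ∧ |f| ≤ fH} := by
      rw [hEeq]; exact measurableSet_Ico.union measurableSet_Ioc
    have hcast : (∫ f₀ in {f : ℝ | fL < |f| ∧ |f| ≤ fH}, ((4 * π ^ 2 * wH * G i j * f₀ ^ 2 : ℝ) : ℂ))
        = (((∫ f₀ in {f : ℝ | fL < |f| ∧ |f| ≤ fH}, 4 * π ^ 2 * wH * G i j * f₀ ^ 2 : ℝ)) : ℂ) :=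
      integral_ofReal
    rw [MeasureTheory.setIntegral_congr_fun hmeas key, hcast,
      MeasureTheory.integral_const_mul]
    have hIoc : IntegrableOn (fun x : ℝ => x ^ 2) (Set.Ioc fL fH) :=
      (intervalIntegrable_iff_integrableOn_Ioc_of_le hfLH.le).mp
        (intervalIntegral.intervalIntegrable_pow 2)
    have hIco : IntegrableOn (fun x : ℝ => x ^ 2) (Set.Ico (-fH) (-fL)) :=
      ((intervalIntegrable_iff_integrableOn_Icc_of_le (by linarith)).mp
        (intervalIntegral.intervalIntegrable_pow 2)).mono_set Set.Ico_subset_Icc_self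
    have hdisj : Disjoint (Set.Ico (-fH) (-fL)) (Set.Ioc fL fH) := by
      rw [Set.disjoint_left]
      rintro x ⟨h1, h2⟩ ⟨h3, h4⟩
      linarith
    have hint : (∫ f in {f : ℝ | fL < |f| ∧ |f| ≤ fH}, f ^ 2) = 2 * (fH ^ 3 - fL ^ 3) / 3 := by
      rw [hEeq, MeasureTheory.setIntegral_union hdisj measurableSet_Ioc hIco hIoc]
      rw [MeasureTheory.setIntegral_congr_set Ico_ae_eq_Ioc]
      rw [← intervalIntegral.integral_of_le (show (-fH:ℝ) ≤ -fL by linarith),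
        ← intervalIntegral.integral_of_le hfLH.le, integral_pow, integral_pow]
      norm_num
      ring
    rw [hint]
    push_cast
    ring
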